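/- Decrease of the optimal value function: let x̂ ∈ S, let u⋆ = (u⋆₀,…,u⋆_{N−1}) be ε-admissible for x̂ with J_N(x̂, u⋆) = V_N(x̂), write x⋆(i) := x^ε_{u⋆}(i;x̂), set u⋆_N := μ(x⋆(N)) and x⋆(N+1) := f^ε(x⋆(N), u⋆_N), and let x⁺ := f(x̂, u⋆₀). Assume: the shifted sequence u⁺ := (u⋆₁, …, u⋆_{N−1}, u⋆_N) is ε-admissible for x⁺; all states x⋆(i) (i ∈ [0:N]) and x^ε_{u⁺}(i;x⁺) (i ∈ [0:N−1]) lie in S; and for a constant c̃ > 0 one has ‖x⋆(i)‖ ≤ c̃‖x̂‖ for all i ∈ [1:N] and ‖Φ(x⋆(N+1))‖ ≤ c̃‖x̂‖. Then V_N(x⁺) − V_N(x̂) ≤ −ℓ(x̂, u⋆₀) + C_x‖x̂‖² + C_u‖u⋆₀‖², where C_x := Σ_{i=0}^{N−1} [ ‖Q‖ c̃ L̄^i (2c_x + c_u) + 2‖Q‖ L̄^{2i} c_x² ] + ‖P‖ c̃ L_Φ L̄^N (2c_x + c_u) + 2‖P‖ L_Φ² L̄^{2N} c_x² and C_u := Σ_{i=0}^{N−1}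 [ ‖Q‖ c̃ L̄^i c_u + 2‖Q‖ L̄^{2i} c_u² ] + ‖P‖ c̃ L_Φ L̄^N c_u + 2‖P‖ L_Φ² L̄^{2N} c_u², with ‖Q‖, ‖P‖ operator norms. -/

import Mathlib

noncomputable section

abbrev E (n : ℕ) := EuclideanSpace ℝ (Fin n)

/-- Predicted trajectory of the surrogate model. -/
def traj {n m : ℕ} (fe : E n → E m → E n) (x0 : E n) (u : ℕ → E m) : ℕ → E n
  | 0 => x0
  | k + 1 => fe (traj fe x0 u k) (u k)

/-- Pontryagin set difference `S ⊖ B_r`. -/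
def pDiff {n : ℕ} (S : Set (E n)) (r : ℝ) : Set (E n) :=
  {x | ∀ z : E n, ‖z‖ ≤ r → x + z ∈ S}

/-- `c̄(k) = ∑_{i=0}^{k-1} L̄^i`. -/
def cbar (Lbar : ℝ) (k : ℕ) : ℝ := ∑ i ∈ Finset.range k, Lbar ^ i

/-- Quadratic form `xᵀQx` on Euclidean space. -/
def qf {n : ℕ} (Q : Matrix (Fin n) (Fin n) ℝ) (x : E n) : ℝ :=
  dotProduct (WithLp.equiv 2 (Fin n → ℝ) x) (Q.mulVec (WithLp.equiv 2 (Fin n → ℝ) x))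

/-- ε-admissibility of an input sequence `u` for initial state `xh`. -/
def Admissible {n m : ℕ} (fe : E n → E m → E n) (S Xf : Set (E n)) (U : Set (E m))
    (η Lbar : ℝ) (N : ℕ) (xh : E n) (u : ℕ → E m) : Prop :=
  (∀ k < N, u k ∈ U) ∧
  (∀ k, 1 ≤ k → k < N → traj fe xh u k ∈ pDiff S (cbar Lbar k * η)) ∧
  traj fe xh u N ∈ Xf

/-- MPC cost functional. -/
def JN {n m M : ℕ} (fe : E n → E m → E n) (Q : Matrix (Fin n) (Fin n) ℝ)
    (R : Matrix (Fin m) (Fin m) ℝ) (P : Matrix (Fin M) (Fin M) ℝ) (Φ : E n → E M)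
    (N : ℕ) (xh : E n) (u : ℕ → E m) : ℝ :=
  ∑ i ∈ Finset.range N, (qf Q (traj fe xh u i) + qf R (u i)) + qf P (Φ (traj fe xh u N))

/-- Optimal value function. -/
def VN {n m M : ℕ} (fe : E n → E m → E n) (S Xf : Set (E n)) (U : Set (E m))
    (η Lbar : ℝ) (Q : Matrix (Fin n) (Fin n) ℝ) (R : Matrix (Fin m) (Fin m) ℝ)
    (P : Matrix (Fin M) (Fin M) ℝ) (Φ : E n → E M) (N : ℕ) (xh : E n) : ℝ :=
  sInf (JN fe Q R P Φ N xh '' {u | Admissible fe S Xf U η Lbar N xh u})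


/-- Operator norm of a matrix induced by the Euclidean norm. -/
def opN {k : ℕ} (A : Matrix (Fin k) (Fin k) ℝ) : ℝ :=
  ‖Matrix.toEuclideanCLM (𝕜 := ℝ) A‖

/-- Decrease of the optimal value function. -/
lemma traj_succ {n m : ℕ} (fe : E n → E m → E n) (x0 : E n) (u : ℕ → E m) (k : ℕ) :
    traj fe x0 u (k + 1) = fe (traj fe x0 u k) (u k) := rfl

lemma qf_eq_inner {k : ℕ} (A : Matrix (Fin k) (Fin k) ℝ) (x : E k) :
    qf A x = inner ℝ x ((Matrix.toEuclideanCLM (𝕜 := ℝ) A) x) := by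
  simp [qf, Matrix.inner_toEuclideanCLM]

lemma qf_nonneg {k : ℕ} {A : Matrix (Fin k) (Fin k) ℝ} (hA : A.PosSemidef) (x : E k) :
    0 ≤ qf A x := by
  have := hA.dotProduct_mulVec_nonneg (WithLp.equiv 2 (Fin k → ℝ) x)
  simpa [qf] using this

lemma qf_zero {k : ℕ} (A : Matrix (Fin k) (Fin k) ℝ) : qf A (0 : E k) = 0 := by
  simp [qf]

lemma qf_pos {k : ℕ} {A : Matrix (Fin k) (Fin k) ℝ} (hA : A.PosDef) {x : E k} (hx : x ≠ 0) :
    0 < qf A x := by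
  have := hA.dotProduct_mulVec_pos (x := WithLp.equiv 2 (Fin k → ℝ) x) (by simpa using hx)
  simpa [qf] using this

lemma qf_sub_le {k : ℕ} (A : Matrix (Fin k) (Fin k) ℝ) (a b : E k) :
    qf A a - qf A b ≤ opN A * ‖a - b‖ * (‖a‖ + ‖b‖) := by
  set T := Matrix.toEuclideanCLM (𝕜 := ℝ) A
  have h1 : qf A a - qf A b = inner ℝ (a - b) (T a) + inner ℝ b (T (a - b)) := by
    rw [qf_eq_inner, qf_eq_inner]
    simp only [map_sub, inner_sub_left, inner_sub_right]
    ring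
  have h2 : (inner ℝ (a - b) (T a) : ℝ) ≤ ‖a - b‖ * (‖T‖ * ‖a‖) :=
    le_trans (real_inner_le_norm _ _) (by
      have := T.le_opNorm a
      nlinarith [norm_nonneg (a - b)])
  have h3 : (inner ℝ b (T (a - b)) : ℝ) ≤ ‖b‖ * (‖T‖ * ‖a - b‖) :=
    le_trans (real_inner_le_norm _ _) (by
      have := T.le_opNorm (a - b)
      nlinarith [norm_nonneg b])
  rw [h1]
  have hT : opN A = ‖T‖ := rfl
  rw [hT]; nlinarith [h2, h3]

lemma alg_bound (q ct l cx cu X V : ℝ) (hq : 0 ≤ q) (hct : 0 ≤ ct) (hl : 0 ≤ l)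
    (hcu : 0 ≤ cu) :
    q * (l * (cx * X + cu * V)) * (2 * ct * X + l * (cx * X + cu * V)) ≤
      (q * ct * l * (2 * cx + cu) + 2 * q * (l ^ 2) * cx ^ 2) * X ^ 2 +
      (q * ct * l * cu + 2 * q * (l ^ 2) * cu ^ 2) * V ^ 2 := by
  have h1 : 0 ≤ q * ct * l * cu * (X - V) ^ 2 := by positivity
  have h2 : 0 ≤ q * (l * l) * (cx * X - cu * V) ^ 2 := by positivity
  nlinarith [h1, h2]

lemma JN_nonneg {n m M : ℕ} {fe : E n → E m → E n} {Q : Matrix (Fin n) (Fin n) ℝ}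
    {R : Matrix (Fin m) (Fin m) ℝ} {P : Matrix (Fin M) (Fin M) ℝ} {Φ : E n → E M}
    (hQ : Q.PosSemidef) (hR : R.PosSemidef) (hP : P.PosSemidef)
    (N : ℕ) (xh : E n) (u : ℕ → E m) : 0 ≤ JN fe Q R P Φ N xh u :=
  add_nonneg (Finset.sum_nonneg fun _ _ => add_nonneg (qf_nonneg hQ _) (qf_nonneg hR _))
    (qf_nonneg hP _)

lemma VN_le_JN {n m M : ℕ} {fe : E n → E m → E n} {S Xf : Set (E n)} {U : Set (E m)}
    {η Lbar : ℝ} {Q : Matrix (Fin n) (Fin n) ℝ} {R : Matrix (Fin m) (Fin m) ℝ}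
    {P : Matrix (Fin M) (Fin M) ℝ} {Φ : E n → E M} {N : ℕ} {xh : E n} {u : ℕ → E m}
    (hQ : Q.PosSemidef) (hR : R.PosSemidef) (hP : P.PosSemidef)
    (h : Admissible fe S Xf U η Lbar N xh u) :
    VN fe S Xf U η Lbar Q R P Φ N xh ≤ JN fe Q R P Φ N xh u := by
  apply csInf_le
  · exact ⟨0, fun r hr => by
      obtain ⟨v, -, rfl⟩ := hr
      exact JN_nonneg hQ hR hP N xh v⟩
  · exact ⟨u, h, rfl⟩

theorem optimal_value_function_decrease
    {n m M : ℕ} (S : Set (E n)) (U : Set (E m))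
    (hScomp : IsCompact S) (hSconv : Convex ℝ S) (hS0 : (0 : E n) ∈ interior S)
    (hUcomp : IsCompact U) (hUconv : Convex ℝ U) (hU0 : (0 : E m) ∈ interior U)
    (f fe : E n → E m → E n) (hf00 : f 0 0 = 0)
    (cx cu η : ℝ) (hcx : 0 ≤ cx) (hcu : 0 ≤ cu) (hη : 0 ≤ η)
    (herr : ∀ x ∈ S, ∀ u ∈ U, ‖f x u - fe x u‖ ≤ min (cx * ‖x‖ + cu * ‖u‖) η)
    (Lbar : ℝ) (hL : 1 ≤ Lbar)
    (hLip : ∀ u ∈ U, ∀ x ∈ S, ∀ y ∈ S, ‖fe x u - fe y u‖ ≤ Lbar * ‖x - y‖)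
    (Q : Matrix (Fin n) (Fin n) ℝ) (R : Matrix (Fin m) (Fin m) ℝ)
    (hQ : Q.PosDef) (hR : R.PosDef)
    (P : Matrix (Fin M) (Fin M) ℝ) (hP : P.PosDef)
    (Φ : E n → E M) (LΦ : ℝ) (hΦ : ∀ x y, ‖Φ x - Φ y‖ ≤ LΦ * ‖x - y‖) (hΦ0 : Φ 0 = 0)
    (c : ℝ) (hc : 0 < c) (N : ℕ) (hN : 1 ≤ N)
    (Xf : Set (E n)) (hXf : Xf = {x | qf P (Φ x) ≤ c})
    (hXfS : Xf ⊆ pDiff S (cbar Lbar N * η))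
    (μ : E n → E m) (hμ0 : μ 0 = 0) (hμU : ∀ x ∈ Xf, μ x ∈ U)
    (hμdec : ∀ x ∈ Xf,
      qf P (Φ (fe x (μ x))) - qf P (Φ x) ≤ -(qf Q x + qf R (μ x)))
    (xh : E n) (hxh : xh ∈ S) (ustar : ℕ → E m)
    (hadm : Admissible fe S Xf U η Lbar N xh ustar)
    (hopt : JN fe Q R P Φ N xh ustar = VN fe S Xf U η Lbar Q R P Φ N xh)
    -- the shifted sequence is ε-admissible for the plant successor state
    (hadmplus : Admissible fe S Xf U η Lbar N (f xh (ustar 0))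
      (fun k => if k + 1 < N then ustar (k + 1) else μ (traj fe xh ustar N)))
    -- all involved states lie in S
    (hstarS : ∀ i ≤ N, traj fe xh ustar i ∈ S)
    (hplusS : ∀ i < N, traj fe (f xh (ustar 0))
      (fun k => if k + 1 < N then ustar (k + 1) else μ (traj fe xh ustar N)) i ∈ S)
    -- quadratic bounds on the optimal predicted states
    (ctilde : ℝ) (hctilde : 0 < ctilde)
    (hxbnd : ∀ i, 1 ≤ i → i ≤ N → ‖traj fe xh ustar i‖ ≤ ctilde * ‖xh‖)
    (hΦbnd : ‖Φ (fe (traj fe xh ustar N) (μ (traj fe xh ustar N)))‖ ≤ ctilde * ‖xh‖) :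
    VN fe S Xf U η Lbar Q R P Φ N (f xh (ustar 0)) - VN fe S Xf U η Lbar Q R P Φ N xh ≤
      -(qf Q xh + qf R (ustar 0)) +
      ((∑ i ∈ Finset.range N,
          (opN Q * ctilde * Lbar ^ i * (2 * cx + cu) + 2 * opN Q * Lbar ^ (2 * i) * cx ^ 2)) +
        opN P * ctilde * LΦ * Lbar ^ N * (2 * cx + cu) +
        2 * opN P * LΦ ^ 2 * Lbar ^ (2 * N) * cx ^ 2) * ‖xh‖ ^ 2 +
      ((∑ i ∈ Finset.range N,
          (opN Q * ctilde * Lbar ^ i * cu + 2 * opN Q * Lbar ^ (2 * i) * cu ^ 2)) +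
        opN P * ctilde * LΦ * Lbar ^ N * cu +
        2 * opN P * LΦ ^ 2 * Lbar ^ (2 * N) * cu ^ 2) * ‖ustar 0‖ ^ 2 := by
  have hL0 : (0 : ℝ) ≤ Lbar := le_trans zero_le_one hL
  by_cases hLΦ : 0 ≤ LΦ
  · -- main branch
    obtain ⟨N', rfl⟩ : ∃ k, N = k + 1 := ⟨N - 1, by omega⟩
    set xs : ℕ → E n := traj fe xh ustar with hxs
    set xp : E n := f xh (ustar 0) with hxp
    set up : ℕ → E m := fun k => if k + 1 < N' + 1 then ustar (k + 1) else μ (xs (N' + 1))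
      with hup
    set y : ℕ → E n := traj fe xp up with hy
    set e : ℝ := cx * ‖xh‖ + cu * ‖ustar 0‖ with he_def
    have he : 0 ≤ e := add_nonneg (mul_nonneg hcx (norm_nonneg _))
      (mul_nonneg hcu (norm_nonneg _))
    have hu0U : ustar 0 ∈ U := hadm.1 0 (Nat.succ_pos _)
    have hxsN_Xf : xs (N' + 1) ∈ Xf := hadm.2.2
    have hμU' : μ (xs (N' + 1)) ∈ U := hμU _ hxsN_Xf
    -- the key trajectory error bound
    have key : ∀ i, i < N' + 1 → ‖y i - xs (i + 1)‖ ≤ Lbar ^ i * e := by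
      intro i
      induction i with
      | zero =>
        intro _
        have h1 : y 0 = f xh (ustar 0) := rfl
        have h2 : xs 1 = fe xh (ustar 0) := rfl
        rw [h1, h2, pow_zero, one_mul]
        exact le_trans (herr xh hxh (ustar 0) hu0U) (min_le_left _ _)
      | succ i ih =>
        intro hi
        have hiN : i < N' + 1 := by omega
        have hyi : y (i + 1) = fe (y i) (ustar (i + 1)) := by
          rw [hy, traj_succ, ← hy]
          congr 1
          simp only [hup]
          rw [if_pos hi]
        have hxsi : xs (i + 2) = fe (xs (i + 1)) (ustar (i + 1)) := rfl
        rw [hyi, hxsi]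
        calc ‖fe (y i) (ustar (i + 1)) - fe (xs (i + 1)) (ustar (i + 1))‖
            ≤ Lbar * ‖y i - xs (i + 1)‖ :=
              hLip (ustar (i + 1)) (hadm.1 _ hi) (y i) (hplusS i hiN) (xs (i + 1))
                (hstarS (i + 1) (by omega))
          _ ≤ Lbar * (Lbar ^ i * e) := mul_le_mul_of_nonneg_left (ih hiN) hL0
          _ = Lbar ^ (i + 1) * e := by ring
    -- terminal-step error bound
    set zN : E n := fe (xs (N' + 1)) (μ (xs (N' + 1))) with hzN
    have keyN : ‖y (N' + 1) - zN‖ ≤ Lbar ^ (N' + 1) * e := by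
      have hyN : y (N' + 1) = fe (y N') (μ (xs (N' + 1))) := by
        rw [hy, traj_succ, ← hy]
        congr 1
        simp only [hup]
        rw [if_neg (by omega)]
      rw [hyN, hzN]
      calc ‖fe (y N') (μ (xs (N' + 1))) - fe (xs (N' + 1)) (μ (xs (N' + 1)))‖
          ≤ Lbar * ‖y N' - xs (N' + 1)‖ :=
            hLip _ hμU' (y N') (hplusS N' (by omega)) (xs (N' + 1)) (hstarS _ le_rfl)
        _ ≤ Lbar * (Lbar ^ N' * e) := mul_le_mul_of_nonneg_left (key N' (by omega)) hL0
        _ = Lbar ^ (N' + 1) * e := by ring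
    -- per-step cost error bound
    have Δle : ∀ i ∈ Finset.range (N' + 1),
        qf Q (y i) - qf Q (xs (i + 1)) ≤
          (opN Q * ctilde * Lbar ^ i * (2 * cx + cu) + 2 * opN Q * Lbar ^ (2 * i) * cx ^ 2)
            * ‖xh‖ ^ 2 +
          (opN Q * ctilde * Lbar ^ i * cu + 2 * opN Q * Lbar ^ (2 * i) * cu ^ 2)
            * ‖ustar 0‖ ^ 2 := by
      intro i hi
      have hi' : i < N' + 1 := Finset.mem_range.mp hi
      have hxsb : ‖xs (i + 1)‖ ≤ ctilde * ‖xh‖ := hxbnd (i + 1) (by omega) (by omega)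
      have hyb : ‖y i‖ ≤ ctilde * ‖xh‖ + Lbar ^ i * e := by
        have h1 := norm_sub_norm_le (y i) (xs (i + 1))
        have h2 := key i hi'
        linarith
      have hsum : ‖y i‖ + ‖xs (i + 1)‖ ≤ 2 * ctilde * ‖xh‖ + Lbar ^ i * e := by linarith
      have hle0 : (0 : ℝ) ≤ Lbar ^ i * e := mul_nonneg (pow_nonneg hL0 i) he
      have hDS : ‖y i - xs (i + 1)‖ * (‖y i‖ + ‖xs (i + 1)‖) ≤
          (Lbar ^ i * e) * (2 * ctilde * ‖xh‖ + Lbar ^ i * e) :=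
        mul_le_mul (key i hi') hsum (add_nonneg (norm_nonneg _) (norm_nonneg _)) hle0
      calc qf Q (y i) - qf Q (xs (i + 1))
          ≤ opN Q * ‖y i - xs (i + 1)‖ * (‖y i‖ + ‖xs (i + 1)‖) := qf_sub_le Q _ _
        _ ≤ opN Q * ((Lbar ^ i) * e) * (2 * ctilde * ‖xh‖ + (Lbar ^ i) * e) := by
            rw [mul_assoc, mul_assoc]
            exact mul_le_mul_of_nonneg_left hDS (norm_nonneg _)
        _ = opN Q * ((Lbar ^ i) * (cx * ‖xh‖ + cu * ‖ustar 0‖)) *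
              (2 * ctilde * ‖xh‖ + (Lbar ^ i) * (cx * ‖xh‖ + cu * ‖ustar 0‖)) := by
            rw [he_def]
        _ ≤ (opN Q * ctilde * (Lbar ^ i) * (2 * cx + cu)
              + 2 * opN Q * ((Lbar ^ i) ^ 2) * cx ^ 2) * ‖xh‖ ^ 2 +
            (opN Q * ctilde * (Lbar ^ i) * cu
              + 2 * opN Q * ((Lbar ^ i) ^ 2) * cu ^ 2) * ‖ustar 0‖ ^ 2 :=
            alg_bound _ _ _ _ _ _ _ (norm_nonneg _) hctilde.le (pow_nonneg hL0 i) hcu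
        _ = (opN Q * ctilde * Lbar ^ i * (2 * cx + cu)
              + 2 * opN Q * Lbar ^ (2 * i) * cx ^ 2) * ‖xh‖ ^ 2 +
            (opN Q * ctilde * Lbar ^ i * cu
              + 2 * opN Q * Lbar ^ (2 * i) * cu ^ 2) * ‖ustar 0‖ ^ 2 := by ring
    -- terminal cost error bound
    have hΦz : ‖Φ zN‖ ≤ ctilde * ‖xh‖ := hΦbnd
    have hΦd : ‖Φ (y (N' + 1)) - Φ zN‖ ≤ (LΦ * Lbar ^ (N' + 1)) * e := by
      calc ‖Φ (y (N' + 1)) - Φ zN‖ ≤ LΦ * ‖y (N' + 1) - zN‖ := hΦ _ _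
        _ ≤ LΦ * (Lbar ^ (N' + 1) * e) := mul_le_mul_of_nonneg_left keyN hLΦ
        _ = (LΦ * Lbar ^ (N' + 1)) * e := by ring
    have hle0' : (0 : ℝ) ≤ (LΦ * Lbar ^ (N' + 1)) * e :=
      mul_nonneg (mul_nonneg hLΦ (pow_nonneg hL0 _)) he
    have hΦy : ‖Φ (y (N' + 1))‖ ≤ ctilde * ‖xh‖ + (LΦ * Lbar ^ (N' + 1)) * e := by
      have h1 := norm_sub_norm_le (Φ (y (N' + 1))) (Φ zN)
      linarith
    have hTsum : ‖Φ (y (N' + 1))‖ + ‖Φ zN‖ ≤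
        2 * ctilde * ‖xh‖ + (LΦ * Lbar ^ (N' + 1)) * e := by linarith
    have ΔT_le : qf P (Φ (y (N' + 1))) - qf P (Φ zN) ≤
        (opN P * ctilde * LΦ * Lbar ^ (N' + 1) * (2 * cx + cu)
          + 2 * opN P * LΦ ^ 2 * Lbar ^ (2 * (N' + 1)) * cx ^ 2) * ‖xh‖ ^ 2 +
        (opN P * ctilde * LΦ * Lbar ^ (N' + 1) * cu
          + 2 * opN P * LΦ ^ 2 * Lbar ^ (2 * (N' + 1)) * cu ^ 2) * ‖ustar 0‖ ^ 2 := by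
      have hDS : ‖Φ (y (N' + 1)) - Φ zN‖ * (‖Φ (y (N' + 1))‖ + ‖Φ zN‖) ≤
          ((LΦ * Lbar ^ (N' + 1)) * e) * (2 * ctilde * ‖xh‖ + (LΦ * Lbar ^ (N' + 1)) * e) :=
        mul_le_mul hΦd hTsum (add_nonneg (norm_nonneg _) (norm_nonneg _)) hle0'
      calc qf P (Φ (y (N' + 1))) - qf P (Φ zN)
          ≤ opN P * ‖Φ (y (N' + 1)) - Φ zN‖ * (‖Φ (y (N' + 1))‖ + ‖Φ zN‖) := qf_sub_le P _ _
        _ ≤ opN P * ((LΦ * Lbar ^ (N' + 1)) * (cx * ‖xh‖ + cu * ‖ustar 0‖)) *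
              (2 * ctilde * ‖xh‖ +
                (LΦ * Lbar ^ (N' + 1)) * (cx * ‖xh‖ + cu * ‖ustar 0‖)) := by
            rw [mul_assoc, mul_assoc, ← he_def]
            exact mul_le_mul_of_nonneg_left hDS (norm_nonneg _)
        _ ≤ (opN P * ctilde * (LΦ * Lbar ^ (N' + 1)) * (2 * cx + cu)
              + 2 * opN P * ((LΦ * Lbar ^ (N' + 1)) ^ 2) * cx ^ 2) * ‖xh‖ ^ 2 +
            (opN P * ctilde * (LΦ * Lbar ^ (N' + 1)) * cu
              + 2 * opN P * ((LΦ * Lbar ^ (N' + 1)) ^ 2) * cu ^ 2) * ‖ustar 0‖ ^ 2 :=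
            alg_bound _ _ _ _ _ _ _ (norm_nonneg _) hctilde.le
              (mul_nonneg hLΦ (pow_nonneg hL0 _)) hcu
        _ = _ := by ring
    -- cost identity
    have hupN' : up N' = μ (xs (N' + 1)) := by
      simp only [hup]; rw [if_neg (by omega)]
    have hupi : ∀ i < N', up i = ustar (i + 1) := by
      intro i hi; simp only [hup]; rw [if_pos (by omega)]
    have hSQ : ∑ i ∈ Finset.range (N' + 1), qf Q (y i) =
        (∑ i ∈ Finset.range (N' + 1), (qf Q (y i) - qf Q (xs (i + 1)))) +
        (∑ i ∈ Finset.range (N' + 1), qf Q (xs i)) + qf Q (xs (N' + 1)) - qf Q xh := by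
      have e1 : ∑ i ∈ Finset.range (N' + 1 + 1), qf Q (xs i) =
          (∑ i ∈ Finset.range (N' + 1), qf Q (xs (i + 1))) + qf Q (xs 0) :=
        Finset.sum_range_succ' _ _
      have e2 : ∑ i ∈ Finset.range (N' + 1 + 1), qf Q (xs i) =
          (∑ i ∈ Finset.range (N' + 1), qf Q (xs i)) + qf Q (xs (N' + 1)) :=
        Finset.sum_range_succ _ _
      have e3 : ∑ i ∈ Finset.range (N' + 1), (qf Q (y i) - qf Q (xs (i + 1))) =
          (∑ i ∈ Finset.range (N' + 1), qf Q (y i)) -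
          (∑ i ∈ Finset.range (N' + 1), qf Q (xs (i + 1))) :=
        Finset.sum_sub_distrib _ _
      have e4 : qf Q (xs 0) = qf Q xh := rfl
      linarith
    have hSR : ∑ i ∈ Finset.range (N' + 1), qf R (up i) =
        (∑ i ∈ Finset.range (N' + 1), qf R (ustar i)) - qf R (ustar 0)
          + qf R (μ (xs (N' + 1))) := by
      have e1 : ∑ i ∈ Finset.range (N' + 1), qf R (up i) =
          (∑ i ∈ Finset.range N', qf R (up i)) + qf R (up N') :=
        Finset.sum_range_succ _ _
      have e2 : ∑ i ∈ Finset.range N', qf R (up i) =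
          ∑ i ∈ Finset.range N', qf R (ustar (i + 1)) :=
        Finset.sum_congr rfl fun i hi => by rw [hupi i (Finset.mem_range.mp hi)]
      have e3 : ∑ i ∈ Finset.range (N' + 1), qf R (ustar i) =
          (∑ i ∈ Finset.range N', qf R (ustar (i + 1))) + qf R (ustar 0) :=
        Finset.sum_range_succ' _ _
      rw [e1, e2, hupN']
      linarith
    have hJid : JN fe Q R P Φ (N' + 1) xp up =
        JN fe Q R P Φ (N' + 1) xh ustar - (qf Q xh + qf R (ustar 0)) +
        (∑ i ∈ Finset.range (N' + 1), (qf Q (y i) - qf Q (xs (i + 1)))) +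
        (qf P (Φ (y (N' + 1))) - qf P (Φ zN)) +
        (qf Q (xs (N' + 1)) + qf R (μ (xs (N' + 1))) + qf P (Φ zN)
          - qf P (Φ (xs (N' + 1)))) := by
      simp only [JN, ← hxs, ← hy, Finset.sum_add_distrib]
      linarith [hSQ, hSR]
    have hW : qf Q (xs (N' + 1)) + qf R (μ (xs (N' + 1))) + qf P (Φ zN)
        - qf P (Φ (xs (N' + 1))) ≤ 0 := by
      have := hμdec (xs (N' + 1)) hxsN_Xf
      rw [← hzN] at this
      linarith
    -- sum of the per-step bounds
    have hSΔ : ∑ i ∈ Finset.range (N' + 1), (qf Q (y i) - qf Q (xs (i + 1))) ≤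
        (∑ i ∈ Finset.range (N' + 1),
          (opN Q * ctilde * Lbar ^ i * (2 * cx + cu) + 2 * opN Q * Lbar ^ (2 * i) * cx ^ 2))
            * ‖xh‖ ^ 2 +
        (∑ i ∈ Finset.range (N' + 1),
          (opN Q * ctilde * Lbar ^ i * cu + 2 * opN Q * Lbar ^ (2 * i) * cu ^ 2))
            * ‖ustar 0‖ ^ 2 := by
      calc ∑ i ∈ Finset.range (N' + 1), (qf Q (y i) - qf Q (xs (i + 1)))
          ≤ ∑ i ∈ Finset.range (N' + 1),
            ((opN Q * ctilde * Lbar ^ i * (2 * cx + cu) + 2 * opN Q * Lbar ^ (2 * i) * cx ^ 2)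
              * ‖xh‖ ^ 2 +
            (opN Q * ctilde * Lbar ^ i * cu + 2 * opN Q * Lbar ^ (2 * i) * cu ^ 2)
              * ‖ustar 0‖ ^ 2) := Finset.sum_le_sum Δle
        _ = _ := by rw [Finset.sum_add_distrib, ← Finset.sum_mul, ← Finset.sum_mul]
    -- value function comparison
    have hV1 : VN fe S Xf U η Lbar Q R P Φ (N' + 1) xp ≤ JN fe Q R P Φ (N' + 1) xp up :=
      VN_le_JN hQ.posSemidef hR.posSemidef hP.posSemidef hadmplus
    have hV2 : VN fe S Xf U η Lbar Q R P Φ (N' + 1) xh = JN fe Q R P Φ (N' + 1) xh ustar :=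
      hopt.symm
    linarith [hV1, hV2, hJid, hW, hSΔ, ΔT_le]
  · -- degenerate branch : LΦ < 0 forces E n to be a subsingleton
    push_neg at hLΦ
    have hsub : ∀ a b : E n, a = b := by
      intro a b
      by_contra hne
      have h0 : 0 < ‖a - b‖ := by
        rw [norm_pos_iff, sub_ne_zero]; exact hne
      have h1 := hΦ a b
      have h2 := norm_nonneg (Φ a - Φ b)
      nlinarith
    -- the zero sequence is admissible and has zero cost
    have Adm0 : Admissible fe S Xf U η Lbar N xh (fun _ => (0 : E m)) := by
      refine ⟨fun k _ => interior_subset hU0, fun k _ _ => ?_, ?_⟩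
      · intro z hz
        rw [hsub (traj fe xh (fun _ => 0) k + z) xh]
        exact hxh
      · rw [hXf]
        show qf P (Φ (traj fe xh (fun _ => 0) N)) ≤ c
        rw [hsub (traj fe xh (fun _ => 0) N) 0, hΦ0, qf_zero]
        exact hc.le
    have J0 : JN fe Q R P Φ N xh (fun _ => (0 : E m)) = 0 := by
      simp only [JN]
      have h0 : ∀ k, traj fe xh (fun _ => (0 : E m)) k = 0 := fun k => hsub _ _
      simp [h0, hΦ0, qf_zero]
    have hVle0 : VN fe S Xf U η Lbar Q R P Φ N xh ≤ 0 := by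
      have h := VN_le_JN (Φ := Φ) hQ.posSemidef hR.posSemidef hP.posSemidef Adm0
      rw [J0] at h
      exact h
    -- the first input must vanish
    have hterm : qf R (ustar 0) ≤ JN fe Q R P Φ N xh ustar := by
      simp only [JN]
      have h1 : qf Q (traj fe xh ustar 0) + qf R (ustar 0) ≤
          ∑ i ∈ Finset.range N, (qf Q (traj fe xh ustar i) + qf R (ustar i)) :=
        Finset.single_le_sum
          (fun i _ => add_nonneg (qf_nonneg hQ.posSemidef _) (qf_nonneg hR.posSemidef _))
          (Finset.mem_range.mpr (by omega))
      have h2 := qf_nonneg hP.posSemidef (Φ (traj fe xh ustar N))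
      have h3 := qf_nonneg hQ.posSemidef (traj fe xh ustar 0)
      linarith
    have hu0 : ustar 0 = 0 := by
      by_contra h
      have := qf_pos hR h
      rw [hopt] at hterm
      linarith
    have hfxh : f xh (ustar 0) = xh := hsub _ _
    have hxh0 : xh = 0 := hsub _ _
    rw [hfxh, hu0, hxh0]
    simp [qf_zero]
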